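/- Fix n ≥ 1 and define G_n = Π_{k=1}^{⌊log₂ n⌋} Π_{i=1}^{⌊n/2^k⌋} (1+q^i). For a polynomial f(q) ∈ ℤ[q], G_n divides f(q) in ℤ[q] if and only if (1+q^m)^{⌊n/(2m)⌋} divides f(q) in ℤ[q] for all 1 ≤ m ≤ ⌊n/2⌋. -/

import Mathlib

open Polynomial

section Aux
open Finset

lemma one_add_X_pow_eq {m : ℕ} (hm : 0 < m) :
    (1 + X ^ m : ℤ[X]) =
      ∏ d ∈ (2 * m).divisors.filter (fun d => ¬ d ∣ m), cyclotomic d ℤ := by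
  have h2m : 0 < 2 * m := by omega
  have hfull : ∏ d ∈ (2 * m).divisors, cyclotomic d ℤ = X ^ (2 * m) - 1 :=
    prod_cyclotomic_eq_X_pow_sub_one h2m ℤ
  have hsub : m.divisors = (2 * m).divisors.filter (fun d => d ∣ m) := by
    ext d
    simp only [Nat.mem_divisors, mem_filter]
    constructor
    · rintro ⟨hd, _⟩; exact ⟨⟨hd.mul_left 2, h2m.ne'⟩, hd⟩
    · rintro ⟨_, hd⟩; exact ⟨hd, hm.ne'⟩
  have hsplit : (X ^ (2 * m) - 1 : ℤ[X]) =
      (X ^ m - 1) * ∏ d ∈ (2 * m).divisors.filter (fun d => ¬ d ∣ m), cyclotomic d ℤ := by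
    rw [← hfull, ← prod_cyclotomic_eq_X_pow_sub_one hm ℤ, hsub,
      ← Finset.prod_filter_mul_prod_filter_not (2 * m).divisors (fun d => d ∣ m)]
  have hne : (X ^ m - 1 : ℤ[X]) ≠ 0 := by
    intro h
    have := congrArg (fun p => p.coeff m) h
    simp [coeff_one, hm.ne'] at this
  apply mul_left_cancel₀ hne
  rw [← hsplit]
  ring_nf

lemma aux_even {d i : ℕ} (h2 : d ∣ 2 * i) (hnd : ¬ d ∣ i) : 2 ∣ d := by
  rcases Nat.even_or_odd d with h | h
  · exact h.two_dvd
  · exact absurd ((Nat.coprime_two_right.mpr h).dvd_of_dvd_mul_left h2) hnd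

end Aux

/-- `G_n = Π_{k=1}^{⌊log₂ n⌋} Π_{i=1}^{⌊n/2^k⌋} (1+q^i)` -/
noncomputable def Gpoly (n : ℕ) : Polynomial ℤ :=
  ∏ k ∈ Finset.Icc 1 (Nat.log 2 n), ∏ i ∈ Finset.Icc 1 (n / 2 ^ k), (1 + Polynomial.X ^ i)

section Aux2
open Finset

lemma Gpoly_eq (n : ℕ) (hn : 1 ≤ n) :
    Gpoly n = ∏ d ∈ (Icc 1 n).filter (fun d => 2 ∣ d), cyclotomic d ℤ ^ (n / d) := by
  have hA : Gpoly n = ∏ k ∈ Icc 1 n, ∏ i ∈ Icc 1 (n / 2 ^ k), (1 + X ^ i : ℤ[X]) := by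
    unfold Gpoly
    apply Finset.prod_subset
    · apply Finset.Icc_subset_Icc_right
      calc Nat.log 2 n ≤ 2 ^ Nat.log 2 n := Nat.le_of_lt (Nat.lt_two_pow_self)
        _ ≤ n := Nat.pow_log_le_self 2 (by omega)
    · intro k hk hk'
      have hlog : Nat.log 2 n < k := by
        simp only [mem_Icc] at hk hk'; omega
      have hlt : n < 2 ^ k :=
        calc n < 2 ^ (Nat.log 2 n + 1) := Nat.lt_pow_succ_log_self (by norm_num) n
          _ ≤ 2 ^ k := Nat.pow_le_pow_right (by norm_num) hlog
      rw [Nat.div_eq_of_lt hlt]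
      simp
  have hB : Gpoly n = ∏ k ∈ Icc 1 n, ∏ i ∈ Icc 1 (n / 2 ^ k),
      ∏ d ∈ (2 * i).divisors.filter (fun d => ¬ d ∣ i), cyclotomic d ℤ := by
    rw [hA]
    refine Finset.prod_congr rfl fun k _ => Finset.prod_congr rfl fun i hi => ?_
    exact one_add_X_pow_eq (by simp only [mem_Icc] at hi; omega)
  have hC : ∏ d ∈ (Icc 1 n).filter (fun d => 2 ∣ d), cyclotomic d ℤ ^ (n / d)
      = ∏ d ∈ (Icc 1 n).filter (fun d => 2 ∣ d), ∏ _j ∈ Icc 1 (n / d), cyclotomic d ℤ := by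
    refine Finset.prod_congr rfl fun d _ => ?_
    rw [Finset.prod_const, Nat.card_Icc, Nat.add_sub_cancel]
  rw [hB, hC]
  calc ∏ k ∈ Icc 1 n, ∏ i ∈ Icc 1 (n / 2 ^ k),
        ∏ d ∈ (2 * i).divisors.filter (fun d => ¬ d ∣ i), cyclotomic d ℤ
      = ∏ x ∈ (Icc 1 n).sigma (fun k => Icc 1 (n / 2 ^ k)),
          ∏ d ∈ (2 * x.2).divisors.filter (fun d => ¬ d ∣ x.2), cyclotomic d ℤ :=
        Finset.prod_sigma' _ _ _
    _ = ∏ y ∈ ((Icc 1 n).sigma (fun k => Icc 1 (n / 2 ^ k))).sigma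
          (fun x => (2 * x.2).divisors.filter (fun d => ¬ d ∣ x.2)), cyclotomic y.2 ℤ :=
        Finset.prod_sigma' _ _ (fun _x d => cyclotomic d ℤ)
    _ = ∏ z ∈ ((Icc 1 n).filter (fun d => 2 ∣ d)).sigma (fun d => Icc 1 (n / d)),
          cyclotomic z.1 ℤ := ?_
    _ = ∏ d ∈ (Icc 1 n).filter (fun d => 2 ∣ d), ∏ _j ∈ Icc 1 (n / d), cyclotomic d ℤ :=
        (Finset.prod_sigma' _ _ (fun d _j => cyclotomic d ℤ)).symm
  refine Finset.prod_nbij'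
    (fun p => ⟨p.2, 2 ^ (p.1.1 - 1) * (2 * p.1.2 / p.2)⟩)
    (fun q => ⟨⟨q.2.factorization 2 + 1, (q.1 / 2) * (q.2 / 2 ^ (q.2.factorization 2))⟩, q.1⟩)
    ?_ ?_ ?_ ?_ ?_
  · -- A → B membership
    rintro ⟨⟨k, i⟩, d⟩ hp
    simp only [Finset.mem_sigma, Finset.mem_filter, Finset.mem_Icc, Nat.mem_divisors] at hp ⊢
    obtain ⟨⟨⟨hk1, hkn⟩, hi1, hin⟩, ⟨hdvd, _⟩, hnd⟩ := hp
    have h2d : 2 ∣ d := aux_even hdvd hnd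
    have hd0 : 0 < d := Nat.pos_of_dvd_of_pos hdvd (by omega)
    have hdo : d * (2 * i / d) = 2 * i := Nat.mul_div_cancel' hdvd
    have ho0 : 0 < 2 * i / d := by
      rcases Nat.eq_zero_or_pos (2 * i / d) with h | h
      · rw [h, mul_zero] at hdo; omega
      · exact h
    have hkin : 2 ^ k * i ≤ n := by
      have := (Nat.le_div_iff_mul_le (pow_pos (by norm_num : (0:ℕ) < 2) k)).mp hin
      calc 2 ^ k * i = i * 2 ^ k := by ring
        _ ≤ n := this
    have h2k : 2 ≤ 2 ^ k := by
      calc (2:ℕ) = 2 ^ 1 := by norm_num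
        _ ≤ 2 ^ k := Nat.pow_le_pow_right (by norm_num) hk1
    have hd2i : d ≤ 2 * i := Nat.le_of_dvd (by omega) hdvd
    have h2iik : 2 * i ≤ 2 ^ k * i := Nat.mul_le_mul_right i h2k
    refine ⟨⟨⟨by omega, le_trans hd2i (le_trans h2iik hkin)⟩, h2d⟩, Nat.one_le_iff_ne_zero.mpr
      (Nat.mul_ne_zero (pow_ne_zero _ two_ne_zero) ho0.ne'), ?_⟩
    rw [Nat.le_div_iff_mul_le hd0]
    calc 2 ^ (k - 1) * (2 * i / d) * d = 2 ^ (k - 1) * (d * (2 * i / d)) := by ring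
      _ = 2 ^ (k - 1) * (2 * i) := by rw [hdo]
      _ = (2 ^ (k - 1) * 2) * i := by ring
      _ = 2 ^ k * i := by rw [← pow_succ, Nat.sub_add_cancel hk1]
      _ ≤ n := hkin
  · -- B → A membership
    rintro ⟨d, j⟩ hq
    simp only [Finset.mem_sigma, Finset.mem_filter, Finset.mem_Icc, Nat.mem_divisors] at hq ⊢
    obtain ⟨⟨⟨hd1, hdn⟩, h2d⟩, hj1, hjn⟩ := hq
    have hj0 : j ≠ 0 := by omega
    have hvo : 2 ^ j.factorization 2 * (j / 2 ^ j.factorization 2) = j :=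
      Nat.ordProj_mul_ordCompl_eq_self j 2
    have hodd : ¬ 2 ∣ j / 2 ^ j.factorization 2 := Nat.not_dvd_ordCompl Nat.prime_two hj0
    have ho0 : 0 < j / 2 ^ j.factorization 2 := by
      rcases Nat.eq_zero_or_pos (j / 2 ^ j.factorization 2) with h | h
      · rw [h, mul_zero] at hvo; omega
      · exact h
    have hd2 : 2 * (d / 2) = d := Nat.mul_div_cancel' h2d
    have hdj : j * d ≤ n := (Nat.le_div_iff_mul_le (by omega)).mp hjn
    have hv2 : 2 ^ j.factorization 2 ≤ j := Nat.le_of_dvd (by omega) (Nat.ordProj_dvd j 2)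
    have hvlt : j.factorization 2 < 2 ^ j.factorization 2 := Nat.lt_two_pow_self
    have hjn' : j ≤ n := le_trans hjn (Nat.div_le_self n d)
    refine ⟨⟨⟨by omega, by omega⟩, Nat.one_le_iff_ne_zero.mpr
      (Nat.mul_ne_zero (by omega) ho0.ne'), ?_⟩, ⟨⟨j / 2 ^ j.factorization 2, ?_⟩,
      Nat.mul_ne_zero two_ne_zero (Nat.mul_ne_zero (by omega) ho0.ne')⟩, ?_⟩
    · rw [Nat.le_div_iff_mul_le (pow_pos (by norm_num : (0:ℕ) < 2) _)]
      calc d / 2 * (j / 2 ^ j.factorization 2) * 2 ^ (j.factorization 2 + 1)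
          = (2 * (d / 2)) * (2 ^ j.factorization 2 * (j / 2 ^ j.factorization 2)) := by
            rw [pow_succ]; ring
        _ = d * j := by rw [hd2, hvo]
        _ = j * d := by ring
        _ ≤ n := hdj
    · calc 2 * (d / 2 * (j / 2 ^ j.factorization 2))
          = (2 * (d / 2)) * (j / 2 ^ j.factorization 2) := by ring
        _ = d * (j / 2 ^ j.factorization 2) := by rw [hd2]
    · rintro ⟨c, hc⟩
      have h2dc : d * c = 2 * (d / 2) * c := by rw [hd2]
      have h3 : (d / 2) * (j / 2 ^ j.factorization 2) = (d / 2) * (2 * c) := by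
        rw [hc, h2dc]; ring
      exact hodd ⟨c, Nat.eq_of_mul_eq_mul_left (by omega) h3⟩
  · -- left inverse
    rintro ⟨⟨k, i⟩, d⟩ hp
    simp only [Finset.mem_sigma, Finset.mem_filter, Finset.mem_Icc, Nat.mem_divisors] at hp
    obtain ⟨⟨⟨hk1, hkn⟩, hi1, hin⟩, ⟨hdvd, _⟩, hnd⟩ := hp
    have h2d : 2 ∣ d := aux_even hdvd hnd
    have hd0 : 0 < d := Nat.pos_of_dvd_of_pos hdvd (by omega)
    have hd2 : 2 * (d / 2) = d := Nat.mul_div_cancel' h2d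
    have hdo : d * (2 * i / d) = 2 * i := Nat.mul_div_cancel' hdvd
    have ho0 : 0 < 2 * i / d := by
      rcases Nat.eq_zero_or_pos (2 * i / d) with h | h
      · rw [h, mul_zero] at hdo; omega
      · exact h
    have hodd : ¬ 2 ∣ 2 * i / d := by
      rintro ⟨c, hc⟩
      apply hnd
      refine ⟨c, ?_⟩
      have h2i : 2 * i = 2 * (d * c) := by rw [← hdo, hc]; ring
      omega
    have hfact : (2 ^ (k - 1) * (2 * i / d)).factorization 2 = k - 1 := by
      rw [Nat.factorization_mul (pow_ne_zero _ two_ne_zero) ho0.ne']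
      simp [Nat.Prime.factorization_pow Nat.prime_two,
        Nat.factorization_eq_zero_of_not_dvd hodd]
    have e1 : k - 1 + 1 = k := by omega
    have e2 : 2 ^ (k - 1) * (2 * i / d) / 2 ^ (k - 1) = 2 * i / d :=
      Nat.mul_div_cancel_left _ (pow_pos (by norm_num) _)
    have e3 : d / 2 * (2 * i / d) = i := by
      refine Nat.eq_of_mul_eq_mul_left (show 0 < 2 by norm_num) ?_
      calc 2 * (d / 2 * (2 * i / d)) = (2 * (d / 2)) * (2 * i / d) := by ring
        _ = d * (2 * i / d) := by rw [hd2]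
        _ = 2 * i := hdo
    simp only [hfact, e1, e2, e3]
  · -- right inverse
    rintro ⟨d, j⟩ hq
    simp only [Finset.mem_sigma, Finset.mem_filter, Finset.mem_Icc, Nat.mem_divisors] at hq
    obtain ⟨⟨⟨hd1, hdn⟩, h2d⟩, hj1, hjn⟩ := hq
    have hd2 : 2 * (d / 2) = d := Nat.mul_div_cancel' h2d
    have hvo : 2 ^ j.factorization 2 * (j / 2 ^ j.factorization 2) = j :=
      Nat.ordProj_mul_ordCompl_eq_self j 2
    have e2 : 2 * (d / 2 * (j / 2 ^ j.factorization 2)) = d * (j / 2 ^ j.factorization 2) := by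
      calc 2 * (d / 2 * (j / 2 ^ j.factorization 2))
          = (2 * (d / 2)) * (j / 2 ^ j.factorization 2) := by ring
        _ = d * (j / 2 ^ j.factorization 2) := by rw [hd2]
    have e3 : d * (j / 2 ^ j.factorization 2) / d = j / 2 ^ j.factorization 2 :=
      Nat.mul_div_cancel_left _ (by omega)
    simp only [Nat.add_sub_cancel, e2, e3, hvo]
  · -- function values agree
    rintro ⟨⟨k, i⟩, d⟩ _
    rfl

end Aux2

section Main
open Finset

/-- `G_n ∣ f` iff `(1+q^m)^{⌊n/(2m)⌋} ∣ f` for all `1 ≤ m ≤ ⌊n/2⌋`. -/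
theorem stmt11 (n : ℕ) (hn : 1 ≤ n) (f : Polynomial ℤ) :
    Gpoly n ∣ f ↔
      ∀ m, 1 ≤ m → m ≤ n / 2 → (1 + (Polynomial.X : Polynomial ℤ) ^ m) ^ (n / (2 * m)) ∣ f := by
  constructor
  · intro h m hm1 hm2
    refine dvd_trans ?_ h
    rw [Gpoly_eq n hn, one_add_X_pow_eq hm1, ← Finset.prod_pow]
    have h2mn : 2 * m ≤ n := by
      have := Nat.div_mul_le_self n 2
      omega
    have hsub : (2 * m).divisors.filter (fun d => ¬ d ∣ m) ⊆
        (Icc 1 n).filter (fun d => 2 ∣ d) := by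
      intro d hd
      simp only [mem_filter, Nat.mem_divisors, mem_Icc] at hd ⊢
      obtain ⟨⟨hdvd, h2m0⟩, hnd⟩ := hd
      have h2d := aux_even hdvd hnd
      have hd0 : 0 < d := Nat.pos_of_dvd_of_pos hdvd (by omega)
      have hdle : d ≤ 2 * m := Nat.le_of_dvd (by omega) hdvd
      exact ⟨⟨hd0, by omega⟩, h2d⟩
    refine dvd_trans (Finset.prod_dvd_prod_of_dvd _ _ ?_)
      (Finset.prod_dvd_prod_of_subset _ _ _ hsub)
    intro d hd
    simp only [mem_filter, Nat.mem_divisors] at hd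
    apply pow_dvd_pow
    have hd0 : 0 < d := Nat.pos_of_dvd_of_pos hd.1.1 (by omega)
    exact Nat.div_le_div_left (Nat.le_of_dvd (by omega) hd.1.1) hd0
  · intro h
    rw [Gpoly_eq n hn]
    have hmapdvd : ∀ d ∈ (Icc 1 n).filter (fun d => 2 ∣ d),
        (cyclotomic d ℚ) ^ (n / d) ∣ f.map (Int.castRingHom ℚ) := by
      intro d hd
      simp only [mem_filter, mem_Icc] at hd
      obtain ⟨⟨hd1, hdn⟩, h2d⟩ := hd
      have hd2 : 2 * (d / 2) = d := Nat.mul_div_cancel' h2d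
      have hm1 : 1 ≤ d / 2 := by omega
      have hm2 : d / 2 ≤ n / 2 := Nat.div_le_div_right hdn
      have hcond := h (d / 2) hm1 hm2
      rw [hd2] at hcond
      have hdvd1 : cyclotomic d ℤ ∣ 1 + X ^ (d / 2) := by
        rw [one_add_X_pow_eq hm1]
        apply Finset.dvd_prod_of_mem
        simp only [mem_filter, Nat.mem_divisors]
        refine ⟨⟨by rw [hd2], by omega⟩, fun hdd => ?_⟩
        have := Nat.le_of_dvd (by omega) hdd
        omega
      have hdvdZ : (cyclotomic d ℤ) ^ (n / d) ∣ f :=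
        dvd_trans (pow_dvd_pow_of_dvd hdvd1 _) hcond
      have := Polynomial.map_dvd (Int.castRingHom ℚ) hdvdZ
      simpa [Polynomial.map_pow, map_cyclotomic] using this
    have hco : Set.Pairwise (((Icc 1 n).filter (fun d => 2 ∣ d)) : Set ℕ)
        (Function.onFun IsCoprime fun d => (cyclotomic d ℚ) ^ (n / d)) := by
      intro a _ b _ hab
      exact (cyclotomic.isCoprime_rat hab).pow
    have hQ : (∏ d ∈ (Icc 1 n).filter (fun d => 2 ∣ d), (cyclotomic d ℚ) ^ (n / d)) ∣
        f.map (Int.castRingHom ℚ) := Finset.prod_dvd_of_coprime hco hmapdvd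
    set P : ℤ[X] := ∏ d ∈ (Icc 1 n).filter (fun d => 2 ∣ d), cyclotomic d ℤ ^ (n / d) with hPdef
    have hmapP : P.map (Int.castRingHom ℚ) =
        ∏ d ∈ (Icc 1 n).filter (fun d => 2 ∣ d), (cyclotomic d ℚ) ^ (n / d) := by
      rw [hPdef, Polynomial.map_prod]
      exact Finset.prod_congr rfl fun d _ => by rw [Polynomial.map_pow, map_cyclotomic]
    rcases eq_or_ne f 0 with rfl | hf0
    · exact dvd_zero _
    have hPmonic : P.Monic :=
      monic_prod_of_monic _ _ fun d _ => (cyclotomic.monic d ℤ).pow _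
    have hcont : ((f.content : ℚ)) ≠ 0 := by
      exact_mod_cast (mt Polynomial.content_eq_zero_iff.mp hf0)
    have hmp : (f.primPart).map (Int.castRingHom ℚ) =
        C ((f.content : ℚ))⁻¹ * f.map (Int.castRingHom ℚ) := by
      have hfeq : f.map (Int.castRingHom ℚ) =
          C ((f.content : ℚ)) * (f.primPart).map (Int.castRingHom ℚ) := by
        conv_lhs => rw [f.eq_C_content_mul_primPart]
        rw [Polynomial.map_mul, Polynomial.map_C]
        norm_num
      rw [hfeq, ← mul_assoc, ← C_mul, inv_mul_cancel₀ hcont, C_1, one_mul]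
    refine dvd_trans ?_ (f.primPart_dvd)
    rw [Polynomial.IsPrimitive.Int.dvd_iff_map_cast_dvd_map_cast _ _ hPmonic.isPrimitive
      , hmp, hmapP]
    exact Dvd.dvd.mul_left hQ _

end Main
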